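/- Let Σ_xx = diag(σ_1², …, σ_N²) with σ_1² ≥ ⋯ ≥ σ_N² > 0, let M ≤ N, and C > 0. Suppose λ★ > 0 and a ∈ {1,…,M} satisfy: λ★ < 2σ_k² for all k ≤ a, λ★ ≥ 2σ_k² for all a < k ≤ M, and (1/2) ∑_{k=1}^{a} ln(2σ_k²/λ★) = C. Then for every real M×N matrix A with A Aᵀ = I_M, every diagonal M×M matrix Σ_ww with positive diagonal entries, and every real N×M matrix B such that the mutual-information constraint (1/2) ln det(Σ_ww⁻¹ (A Σ_xx Aᵀ + Σ_ww)) ≤ C holds, the mean-squared error satisfies Tr(Σ_xx − 2 B A Σ_xx + B (A Σ_xx Aᵀ + Σ_ww) Bᵀ) ≥ ∑_{n=a+1}^{N} σ_n² + a·λ★/2. -/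

import Mathlib

open Matrix BigOperators Finset

section helpers
/-- reindex a `Fin L` filtered sum as a `range k` sum of the ℕ-extension. -/
lemma sum_filter_lt_eq_range {L : ℕ} (f : Fin L → ℝ) (k : ℕ) (hk : k ≤ L) :
    ∑ n ∈ Finset.univ.filter (fun n : Fin L => (n:ℕ) < k), f n
      = ∑ i ∈ Finset.range k, (if h : i < L then f ⟨i, h⟩ else 0) := by
  rw [Finset.sum_filter]
  calc ∑ n : Fin L, (if (n:ℕ) < k then f n else 0)
      = ∑ n : Fin L, (if ((n:ℕ)) < k then (if h : ((n:ℕ)) < L then f ⟨(n:ℕ), h⟩ else 0) else 0) := by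
        apply Finset.sum_congr rfl
        intro n _
        by_cases h : (n:ℕ) < k
        · rw [if_pos h, if_pos h, dif_pos n.isLt]
        · rw [if_neg h, if_neg h]
    _ = ∑ i ∈ Finset.range L, (if i < k then (if h : i < L then f ⟨i, h⟩ else 0) else 0) :=
        Fin.sum_univ_eq_sum_range (fun i => if i < k then (if h : i < L then f ⟨i, h⟩ else 0) else 0) L
    _ = ∑ i ∈ Finset.range k, (if h : i < L then f ⟨i, h⟩ else 0) := by
        rw [← Finset.sum_filter]
        congr 1
        ext i
        simp only [Finset.mem_filter, Finset.mem_range]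
        omega

lemma filter_lt_card {N m : ℕ} (hm : m ≤ N) :
    ((Finset.univ : Finset (Fin N)).filter (fun n : Fin N => (n:ℕ) < m)).card = m := by
  have h2 := sum_filter_lt_eq_range (fun _ : Fin N => (1:ℝ)) m hm
  have h3 : ∑ i ∈ Finset.range m, (if h : i < N then (fun _ : Fin N => (1:ℝ)) ⟨i,h⟩ else 0) = (m:ℝ) := by
    have hcong : ∀ i ∈ Finset.range m,
        (if h : i < N then (fun _ : Fin N => (1:ℝ)) ⟨i,h⟩ else 0) = 1 := by
      intro i hi
      rw [dif_pos (lt_of_lt_of_le (Finset.mem_range.mp hi) hm)]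
    rw [Finset.sum_congr rfl hcong]
    simp
  have h1 : (((Finset.univ : Finset (Fin N)).filter (fun n : Fin N => (n:ℕ) < m)).card : ℝ)
      = ∑ n ∈ Finset.univ.filter (fun n : Fin N => (n:ℕ) < m), (fun _ : Fin N => (1:ℝ)) n := by
    simp
  exact_mod_cast h1.trans (h2.trans h3)
end helpers

noncomputable def psiF (lam s : ℝ) : ℝ :=
  if 2*s ≤ lam then 0 else s - lam/2 - lam/2 * Real.log (2*s/lam)

noncomputable def tF (lam s : ℝ) : ℝ :=
  if 2*s ≤ lam then 0 else 1 - lam/(2*s)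

lemma psiF_nonneg {lam : ℝ} (hlam : 0 < lam) (s : ℝ) : 0 ≤ psiF lam s := by
  unfold psiF
  split_ifs with h
  · exact le_refl 0
  · push_neg at h
    have hs : 0 < s := by nlinarith
    have hx : 0 < 2*s/lam := by positivity
    have := Real.log_le_sub_one_of_pos hx
    have h2 : Real.log (2*s/lam) ≤ 2*s/lam - 1 := this
    have : lam/2 * Real.log (2*s/lam) ≤ lam/2 * (2*s/lam - 1) := by nlinarith
    have he : lam/2 * (2*s/lam - 1) = s - lam/2 := by field_simp
    nlinarith

lemma tF_nonneg {lam : ℝ} (hlam : 0 < lam) (s : ℝ) : 0 ≤ tF lam s := by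
  unfold tF
  split_ifs with h
  · exact le_refl 0
  · push_neg at h
    have hs : 0 < s := by nlinarith
    have : lam/(2*s) < 1 := by rw [div_lt_one (by positivity)]; linarith
    linarith

lemma tF_mono {lam : ℝ} (hlam : 0 < lam) {x y : ℝ} (hx : 0 ≤ x) (hxy : x ≤ y) :
    tF lam x ≤ tF lam y := by
  unfold tF
  split_ifs with h1 h2 h2
  · exact le_refl 0
  · push_neg at h2
    have hy : 0 < y := by nlinarith
    have : lam/(2*y) < 1 := by rw [div_lt_one (by positivity)]; linarith
    linarith
  · push_neg at h1; linarith
  · push_neg at h1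
    have hx' : 0 < x := by nlinarith
    have : lam/(2*y) ≤ lam/(2*x) := by
      apply div_le_div_of_nonneg_left hlam.le (by positivity) (by linarith)
    linarith

/-- gradient inequality: psi y ≥ psi x + t x * (y - x) for x ≥ 0, y > 0 -/
lemma psiF_grad {lam : ℝ} (hlam : 0 < lam) {x y : ℝ} (hx : 0 ≤ x) (hy : 0 < y) :
    psiF lam x + tF lam x * (y - x) ≤ psiF lam y := by
  unfold psiF tF
  split_ifs with h1 h2 h2
  · simpa using psiF_nonneg hlam y |>.trans_eq (by unfold psiF; rw [if_pos h2])
  · -- 2x ≤ lam, 2y > lam : need 0 ≤ psi y (else branch)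
    push_neg at h2
    have := psiF_nonneg hlam y
    unfold psiF at this; rw [if_neg (not_le.mpr h2)] at this
    simpa using this
  · -- 2x > lam, 2y ≤ lam: 0 ≥ inner x + (1 - lam/(2x))(y-x)
    push_neg at h1
    have hx' : 0 < x := by nlinarith
    -- reduces to y(1 - lam/(2x)) ≤ (lam/2) log(2x/lam)
    have hu : 0 < lam/(2*x) := by positivity
    have hlog : Real.log (lam/(2*x)) ≤ lam/(2*x) - 1 := Real.log_le_sub_one_of_pos hu
    have hlog2 : 1 - lam/(2*x) ≤ Real.log (2*x/lam) := by
      have : Real.log (lam/(2*x)) = - Real.log (2*x/lam) := by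
        rw [← Real.log_inv]; congr 1; field_simp
      nlinarith
    have hy2 : y ≤ lam/2 := by linarith
    have hfac : 0 ≤ 1 - lam/(2*x) := by
      have : lam/(2*x) < 1 := by rw [div_lt_one (by positivity)]; linarith
      linarith
    have h3 : y * (1 - lam/(2*x)) ≤ (lam/2) * (1 - lam/(2*x)) := by nlinarith
    have h4 : (lam/2) * (1 - lam/(2*x)) ≤ (lam/2) * Real.log (2*x/lam) := by nlinarith
    have hexp : x - lam/2 - lam/2 * Real.log (2*x/lam) + (1 - lam/(2*x)) * (y - x)
        = y * (1 - lam/(2*x)) - lam/2 * Real.log (2*x/lam) := by field_simp; ring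
    nlinarith [h3.trans h4]
  · -- both > lam
    push_neg at h1 h2
    have hx' : 0 < x := by nlinarith
    have hlog : Real.log (y/x) ≤ y/x - 1 := Real.log_le_sub_one_of_pos (by positivity)
    have hsplit : Real.log (2*y/lam) = Real.log (2*x/lam) + Real.log (y/x) := by
      rw [← Real.log_mul (by positivity) (by positivity)]
      congr 1; field_simp
    have key : lam/2 * Real.log (y/x) ≤ lam/2 * (y/x - 1) := by nlinarith
    have he : lam/2 * (y/x-1) = (lam/(2*x)) * (y - x) := by field_simp
    nlinarith [key.trans_eq he]

/-- per-mode bound: (d/(1+d)) * s ≤ psi s + (lam/2) log (1+d) -/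
lemma permode {lam : ℝ} (hlam : 0 < lam) {s d : ℝ} (hs : 0 ≤ s) (hd : 0 ≤ d) :
    d/(1+d) * s ≤ psiF lam s + lam/2 * Real.log (1+d) := by
  have h1d : (0:ℝ) < 1 + d := by linarith
  unfold psiF
  split_ifs with h
  · -- 2s ≤ lam : ds/(1+d) ≤ (lam/2) log(1+d); use log(1+d) ≥ d/(1+d)
    have hlog : Real.log (1/(1+d)) ≤ 1/(1+d) - 1 := Real.log_le_sub_one_of_pos (by positivity)
    have hli : Real.log (1/(1+d)) = - Real.log (1+d) := by
      rw [← Real.log_inv]; congr 1; field_simp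
    have hge : d/(1+d) ≤ Real.log (1+d) := by
      rw [hli] at hlog
      have : 1/(1+d) - 1 = -(d/(1+d)) := by field_simp; ring
      linarith [hlog.trans_eq this]
    have h2 : d/(1+d) * s ≤ d/(1+d) * (lam/2) := by
      apply mul_le_mul_of_nonneg_left (by linarith) (by positivity)
    have h3 : d/(1+d) * (lam/2) ≤ Real.log (1+d) * (lam/2) := by nlinarith
    nlinarith
  · push_neg at h
    have hs' : 0 < s := by nlinarith
    -- let z = 2s/(lam(1+d)); need log z ≤ z - 1
    set z := 2*s/(lam*(1+d)) with hz
    have hz0 : 0 < z := by positivity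
    have hlog : Real.log z ≤ z - 1 := Real.log_le_sub_one_of_pos hz0
    have hzeq : Real.log z = Real.log (2*s/lam) - Real.log (1+d) := by
      rw [hz, ← Real.log_div (by positivity) (by positivity)]
      congr 1; field_simp
    have hzval : lam/2 * z = s/(1+d) := by rw [hz]; field_simp
    have key : lam/2 * Real.log z ≤ lam/2 * (z-1) := by nlinarith
    have h2 : d/(1+d) * s = s - s/(1+d) := by field_simp; ring
    nlinarith [key]


/-- Abel-type lemma -/
lemma abel_nonpos (t e : ℕ → ℝ) (Mn : ℕ) (ht0 : ∀ i, i < Mn → 0 ≤ t i)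
    (hanti : ∀ i j, i ≤ j → j < Mn → t j ≤ t i)
    (hE : ∀ k, k ≤ Mn → ∑ i ∈ range k, e i ≤ 0) :
    ∑ i ∈ range Mn, t i * e i ≤ 0 := by
  have claim : ∀ n : ℕ, ∀ c : ℝ, 0 ≤ c → (∀ i, i < n → c ≤ t i) →
      (∀ i j, i ≤ j → j < n → t j ≤ t i) →
      (∀ k, k ≤ n → ∑ i ∈ range k, e i ≤ 0) →
      ∑ i ∈ range n, t i * e i ≤ c * ∑ i ∈ range n, e i := by
    intro n
    induction n with
    | zero => intro c hc _ _ _; simp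
    | succ n ih =>
      intro c hc hct hanti hE
      have hcn : c ≤ t n := hct n (Nat.lt_succ_self n)
      have h1 : ∑ i ∈ range n, t i * e i ≤ t n * ∑ i ∈ range n, e i := by
        apply ih (t n) (hc.trans hcn)
        · intro i hi; exact hanti i n (Nat.le_of_lt hi) (Nat.lt_succ_self n)
        · intro i j hij hj; exact hanti i j hij (hj.trans (Nat.lt_succ_self n))
        · intro k hk; exact hE k (hk.trans (Nat.le_succ n))
      have hEn1 : (∑ i ∈ range n, e i) + e n ≤ 0 := by
        have := hE (n+1) le_rfl
        rwa [Finset.sum_range_succ] at this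
      rw [Finset.sum_range_succ, Finset.sum_range_succ]
      nlinarith [mul_nonpos_of_nonneg_of_nonpos (sub_nonneg.mpr hcn) hEn1]
  have := claim Mn 0 le_rfl (fun i hi => ht0 i hi) hanti hE
  simpa using this

/-- Tomic: sorted u dominated in prefix sums by v gives convex-sum inequality. -/
lemma tomic {lam : ℝ} (hlam : 0 < lam) (Mn : ℕ) (u v : ℕ → ℝ)
    (hu0 : ∀ i, i < Mn → 0 ≤ u i)
    (hv0 : ∀ i, i < Mn → 0 < v i)
    (huanti : ∀ i j, i ≤ j → j < Mn → u j ≤ u i)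
    (hpre : ∀ k, k ≤ Mn → ∑ i ∈ range k, u i ≤ ∑ i ∈ range k, v i) :
    ∑ i ∈ range Mn, psiF lam (u i) ≤ ∑ i ∈ range Mn, psiF lam (v i) := by
  have hgrad : ∀ i, i < Mn →
      psiF lam (u i) - psiF lam (v i) ≤ tF lam (u i) * (u i - v i) := by
    intro i hi
    have := psiF_grad hlam (hu0 i hi) (hv0 i hi)
    nlinarith [this]
  have habel : ∑ i ∈ range Mn, tF lam (u i) * (u i - v i) ≤ 0 := by
    apply abel_nonpos _ _ Mn
    · intro i _; exact tF_nonneg hlam _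
    · intro i j hij hj; exact tF_mono hlam (hu0 j hj) (huanti i j hij hj)
    · intro k hk
      rw [Finset.sum_sub_distrib]
      linarith [hpre k hk]
  have hfin : ∑ i ∈ range Mn, (psiF lam (u i) - psiF lam (v i)) ≤ 0 := by
    calc ∑ i ∈ range Mn, (psiF lam (u i) - psiF lam (v i))
        ≤ ∑ i ∈ range Mn, tF lam (u i) * (u i - v i) :=
          Finset.sum_le_sum (fun i hi => hgrad i (Finset.mem_range.mp hi))
      _ ≤ 0 := habel
  rw [Finset.sum_sub_distrib] at hfin
  linarith

/-- weighted top-sum -/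
lemma topsum {N : ℕ} (σ : Fin N → ℝ) (hσ0 : ∀ n, 0 ≤ σ n)
    (hsorted : ∀ i j : Fin N, i ≤ j → σ j ≤ σ i)
    (α : Fin N → ℝ) (hα0 : ∀ n, 0 ≤ α n) (hα1 : ∀ n, α n ≤ 1)
    (m : ℕ) (hm : m ≤ N) (hαs : ∑ n, α n ≤ (m:ℝ)) :
    ∑ n, σ n * α n ≤ ∑ n ∈ Finset.univ.filter (fun n : Fin N => (n:ℕ) < m), σ n := by
  rcases Nat.lt_or_ge m N with hmN | hmN
  · set c := σ ⟨m, hmN⟩ with hc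
    have hc0 : 0 ≤ c := hσ0 _
    have key : ∀ n : Fin N, σ n * α n - (if (n:ℕ) < m then σ n else 0) ≤
        c * (α n - (if (n:ℕ) < m then 1 else 0)) := by
      intro n
      split_ifs with h
      · have hcn : c ≤ σ n := hsorted n ⟨m, hmN⟩ (by simp only [Fin.le_def]; exact Nat.le_of_lt h)
        nlinarith [hα1 n, hα0 n]
      · have hcn : σ n ≤ c := hsorted ⟨m, hmN⟩ n (by simp only [Fin.le_def]; omega)
        nlinarith [hα0 n, hα1 n]
    have hsum := Finset.sum_le_sum (fun n (_ : n ∈ Finset.univ) => key n)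
    rw [Finset.sum_sub_distrib] at hsum
    have h1 : ∑ n : Fin N, (if (n:ℕ) < m then σ n else 0)
        = ∑ n ∈ Finset.univ.filter (fun n : Fin N => (n:ℕ) < m), σ n := by
      rw [Finset.sum_filter]
    have h2 : ∑ n : Fin N, (if (n:ℕ) < m then (1:ℝ) else 0) = (m:ℝ) := by
      rw [← Finset.sum_filter]
      have := filter_lt_card (le_of_lt hmN) (N := N)
      simp [this]
    have hsum2 : ∑ n : Fin N, c * (α n - if (n:ℕ) < m then (1:ℝ) else 0)
        = c * ((∑ n, α n) - (m:ℝ)) := by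
      rw [← h2, ← Finset.sum_sub_distrib, Finset.mul_sum]
    rw [hsum2, h1] at hsum
    nlinarith [hsum, hc0, hαs]
  · have hfil : Finset.univ.filter (fun n : Fin N => (n:ℕ) < m) = Finset.univ := by
      apply Finset.filter_true_of_mem; intro n _; exact lt_of_lt_of_le n.isLt hmN
    rw [hfil]
    apply Finset.sum_le_sum
    intro n _
    nlinarith [hα1 n, hα0 n, hσ0 n]


/-- key combinatorial lemma: subset-sum domination implies psiF-sum bound. -/
lemma key_scalar {N M : ℕ} (hMN : M ≤ N) (σ : Fin N → ℝ) (hσ : ∀ n, 0 < σ n)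
    {lam : ℝ} (hlam : 0 < lam)
    (s : Fin M → ℝ) (hs0 : ∀ i, 0 ≤ s i)
    (hsub : ∀ I : Finset (Fin M), ∑ i ∈ I, s i
      ≤ ∑ n ∈ Finset.univ.filter (fun n : Fin N => (n:ℕ) < I.card), σ n) :
    ∑ i, psiF lam (s i)
      ≤ ∑ n ∈ Finset.univ.filter (fun n : Fin N => (n:ℕ) < M), psiF lam (σ n) := by
  classical
  set perm := Tuple.sort s with hperm
  set emb : Fin M → Fin M := fun i => perm (Fin.rev i) with hemb
  have hembinj : Function.Injective emb := by
    intro x y hxy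
    have := perm.injective hxy
    exact Fin.rev_injective this
  set u : ℕ → ℝ := (fun i => if h : i < M then s (emb ⟨i, h⟩) else 0) with hu
  set v : ℕ → ℝ := (fun i => if h : i < N then σ ⟨i, h⟩ else 0) with hv
  have hu0 : ∀ i, i < M → 0 ≤ u i := by
    intro i hi; rw [hu]; simp only [dif_pos hi]; exact hs0 _
  have hv0 : ∀ i, i < M → 0 < v i := by
    intro i hi; rw [hv]; simp only; rw [dif_pos (lt_of_lt_of_le hi hMN)]; exact hσ _
  have huanti : ∀ i j, i ≤ j → j < M → u j ≤ u i := by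
    intro i j hij hj
    have hi : i < M := lt_of_le_of_lt hij hj
    rw [hu]; simp only [dif_pos hi, dif_pos hj]
    have hrev : Fin.rev (⟨j, hj⟩ : Fin M) ≤ Fin.rev (⟨i, hi⟩ : Fin M) :=
      Fin.rev_le_rev.mpr (by exact Fin.mk_le_mk.mpr hij)
    exact Tuple.monotone_sort s hrev
  have hpre : ∀ k, k ≤ M → ∑ i ∈ range k, u i ≤ ∑ i ∈ range k, v i := by
    intro k hk
    have e1 : ∑ n ∈ Finset.univ.filter (fun n : Fin M => (n:ℕ) < k), s (emb n)
        = ∑ i ∈ range k, u i := by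
      have := sum_filter_lt_eq_range (fun n : Fin M => s (emb n)) k hk
      rw [this]
    set Jk := Finset.image emb (Finset.univ.filter (fun n : Fin M => (n:ℕ) < k)) with hJk
    have e2 : ∑ j ∈ Jk, s j
        = ∑ n ∈ Finset.univ.filter (fun n : Fin M => (n:ℕ) < k), s (emb n) :=
      Finset.sum_image (fun x _ y _ h => hembinj h)
    have hcard : Jk.card = k := by
      rw [hJk, Finset.card_image_of_injective _ hembinj, filter_lt_card hk]
    have e3 : ∑ i ∈ range k, v i
        = ∑ n ∈ Finset.univ.filter (fun n : Fin N => (n:ℕ) < k), σ n :=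
      (sum_filter_lt_eq_range σ k (hk.trans hMN)).symm
    have := hsub Jk
    rw [hcard] at this
    rw [← e1, ← e2, e3]
    exact this
  have htom := tomic hlam M u v hu0 hv0 huanti hpre
  have eL : ∑ i ∈ range M, psiF lam (u i) = ∑ i, psiF lam (s i) := by
    have e1 : ∑ i ∈ range M, psiF lam (u i)
        = ∑ i ∈ range M, (if h : i < M then psiF lam (s (emb ⟨i, h⟩)) else 0) := by
      apply Finset.sum_congr rfl
      intro i hi
      have hi' := Finset.mem_range.mp hi
      rw [hu]; simp only [dif_pos hi']
    have e2 : ∑ n ∈ Finset.univ.filter (fun n : Fin M => (n:ℕ) < M), psiF lam (s (emb n))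
        = ∑ i ∈ range M, (if h : i < M then psiF lam (s (emb ⟨i, h⟩)) else 0) :=
      sum_filter_lt_eq_range (fun n : Fin M => psiF lam (s (emb n))) M le_rfl
    have e3 : Finset.univ.filter (fun n : Fin M => (n:ℕ) < M) = Finset.univ := by
      apply Finset.filter_true_of_mem; intro n _; exact n.isLt
    have e4 : ∑ n : Fin M, psiF lam (s (emb n)) = ∑ i : Fin M, psiF lam (s i) := by
      have : emb = ⇑(Fin.revPerm.trans perm) := by
        funext i; rw [hemb]; rfl
      rw [this]
      exact Equiv.sum_comp (Fin.revPerm.trans perm) (fun j => psiF lam (s j))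
    rw [e1, ← e2, e3, e4]
  have eR : ∑ i ∈ range M, psiF lam (v i)
      = ∑ n ∈ Finset.univ.filter (fun n : Fin N => (n:ℕ) < M), psiF lam (σ n) := by
    have e1 : ∑ i ∈ range M, psiF lam (v i)
        = ∑ i ∈ range M, (if h : i < N then psiF lam (σ ⟨i, h⟩) else 0) := by
      apply Finset.sum_congr rfl
      intro i hi
      have hi' := lt_of_lt_of_le (Finset.mem_range.mp hi) hMN
      rw [hv]; simp only [dif_pos hi']
    have e2 := sum_filter_lt_eq_range (fun n : Fin N => psiF lam (σ n)) M hMN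
    rw [e1, e2]
  rw [eL, eR] at htom
  exact htom

set_option maxHeartbeats 1600000 in
/-- Converse part of Theorem 1 (optimal SF channel for a Gaussian
source, linear encoder/decoder): under the water-filling conditions on λ★ and the
active-set size a, every encoder A with A Aᵀ = I, every diagonal noise covariance
Σ_ww with positive entries satisfying the mutual-information constraint, and every
decoder B incur MSE at least ∑_{n=a+1}^N σ_n² + a λ★/2.
(Indices are 0-based: source n of the paper corresponds to index n−1.) -/
theorem stmt_14 {N M : ℕ} (hMN : M ≤ N)
    (σ : Fin N → ℝ) (hσ : ∀ n, 0 < σ n)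
    (hsorted : ∀ i j : Fin N, i ≤ j → σ j ≤ σ i)
    (C : ℝ) (hC : 0 < C)
    (lam : ℝ) (hlam : 0 < lam)
    (a : ℕ) (ha1 : 1 ≤ a) (haM : a ≤ M)
    (hact : ∀ k : Fin N, (k : ℕ) < a → lam < 2 * σ k)
    (hinact : ∀ k : Fin N, a ≤ (k : ℕ) → (k : ℕ) < M → 2 * σ k ≤ lam)
    (hrate : (1 / 2 : ℝ) *
        ∑ k ∈ Finset.univ.filter (fun k : Fin N => (k : ℕ) < a),
          Real.log (2 * σ k / lam) = C) :
    ∀ A : Matrix (Fin M) (Fin N) ℝ, A * Aᵀ = 1 →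
    ∀ w : Fin M → ℝ, (∀ i, 0 < w i) →
    ∀ B : Matrix (Fin N) (Fin M) ℝ,
      (1 / 2 : ℝ) * Real.log
          (((Matrix.diagonal w)⁻¹ *
            (A * Matrix.diagonal σ * Aᵀ + Matrix.diagonal w)).det) ≤ C →
      Matrix.trace (Matrix.diagonal σ - (2 : ℝ) • (B * A * Matrix.diagonal σ)
          + B * (A * Matrix.diagonal σ * Aᵀ + Matrix.diagonal w) * Bᵀ) ≥
        (∑ n ∈ Finset.univ.filter (fun n : Fin N => a ≤ (n : ℕ)), σ n)
          + (a : ℝ) * lam / 2 := by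
  intro A hA w hw B hrateB
  classical
  set Sm := Matrix.diagonal σ with hSm
  set Wm := Matrix.diagonal w with hWm
  set R := A * Sm * Aᵀ + Wm with hRdef
  set sq : Fin N → ℝ := fun n => Real.sqrt (σ n) with hsqdef
  set wsq : Fin M → ℝ := fun i => Real.sqrt (w i) with hwsdef
  have hsq2 : ∀ n, sq n * sq n = σ n := fun n => Real.mul_self_sqrt (hσ n).le
  have hws2 : ∀ i, wsq i * wsq i = w i := fun i => Real.mul_self_sqrt (hw i).le
  have hwsne : ∀ i, wsq i ≠ 0 := fun i => ne_of_gt (Real.sqrt_pos.mpr (hw i))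
  set Ss : Matrix (Fin N) (Fin N) ℝ := Matrix.diagonal sq with hSs
  set Ws : Matrix (Fin M) (Fin M) ℝ := Matrix.diagonal wsq with hWs
  set Wsi : Matrix (Fin M) (Fin M) ℝ := Matrix.diagonal (fun i => (wsq i)⁻¹) with hWsi
  set H : Matrix (Fin M) (Fin N) ℝ := A * Ss with hHdef
  set K : Matrix (Fin M) (Fin N) ℝ := Wsi * H with hKdef
  set T : Matrix (Fin M) (Fin M) ℝ := K * Kᵀ with hTdef
  -- basic diagonal identities
  have hSsSs : Ss * Ss = Sm := by
    rw [hSs, hSm, Matrix.diagonal_mul_diagonal]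
    exact congrArg Matrix.diagonal (funext hsq2)
  have hWsWs : Ws * Ws = Wm := by
    rw [hWs, hWm, Matrix.diagonal_mul_diagonal]
    exact congrArg Matrix.diagonal (funext hws2)
  have hWsWsi : Ws * Wsi = 1 := by
    rw [hWs, hWsi, Matrix.diagonal_mul_diagonal]
    rw [show (fun i => wsq i * (wsq i)⁻¹) = fun _ => (1:ℝ) by
      funext i; exact mul_inv_cancel₀ (hwsne i)]
    exact Matrix.diagonal_one
  have hWsiWs : Wsi * Ws = 1 := by
    rw [hWs, hWsi, Matrix.diagonal_mul_diagonal]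
    rw [show (fun i => (wsq i)⁻¹ * wsq i) = fun _ => (1:ℝ) by
      funext i; exact inv_mul_cancel₀ (hwsne i)]
    exact Matrix.diagonal_one
  have hSsT : Ssᵀ = Ss := by rw [hSs, Matrix.diagonal_transpose]
  have hWsiT : Wsiᵀ = Wsi := by rw [hWsi, Matrix.diagonal_transpose]
  have hSmT : Smᵀ = Sm := by rw [hSm, Matrix.diagonal_transpose]
  have hHT : Hᵀ = Ss * Aᵀ := by rw [hHdef, Matrix.transpose_mul, hSsT]
  have hKT : Kᵀ = Hᵀ * Wsi := by rw [hKdef, Matrix.transpose_mul, hWsiT]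
  have hASAT : A * Sm * Aᵀ = H * Hᵀ := by
    rw [hHT, hHdef, ← hSsSs]
    simp only [Matrix.mul_assoc]
  have hTalt : T = Wsi * (H * Hᵀ) * Wsi := by
    rw [hTdef, hKT, hKdef]
    simp only [Matrix.mul_assoc]
  have hRWs : R = Ws * (1 + T) * Ws := by
    rw [hRdef, hASAT, ← hWsWs, hTalt]
    have hXX : Ws * (Wsi * (H * Hᵀ) * Wsi) * Ws = H * Hᵀ := by
      calc Ws * (Wsi * (H * Hᵀ) * Wsi) * Ws
          = (Ws * Wsi) * ((H * Hᵀ) * (Wsi * Ws)) := by simp only [Matrix.mul_assoc]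
        _ = H * Hᵀ := by rw [hWsWsi, hWsiWs, Matrix.one_mul, Matrix.mul_one]
    rw [Matrix.mul_add, Matrix.add_mul, Matrix.mul_one, hXX, add_comm]
  -- positivity
  have hTpsd : T.PosSemidef := by
    rw [hTdef, ← Matrix.conjTranspose_eq_transpose_of_trivial]
    exact Matrix.posSemidef_self_mul_conjTranspose K
  have h1T : (1 + T).PosDef := Matrix.PosDef.add_posSemidef Matrix.PosDef.one hTpsd
  have h1Tdet : IsUnit (1 + T).det := isUnit_iff_ne_zero.mpr (ne_of_gt h1T.det_pos)
  have h1TI : (1 + T) * (1 + T)⁻¹ = 1 := Matrix.mul_nonsing_inv _ h1Tdet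
  have hRinvEq : R * (Wsi * (1 + T)⁻¹ * Wsi) = 1 := by
    rw [hRWs]
    calc Ws * (1 + T) * Ws * (Wsi * (1 + T)⁻¹ * Wsi)
        = Ws * ((1 + T) * ((Ws * Wsi) * ((1 + T)⁻¹ * Wsi))) := by
          simp only [Matrix.mul_assoc]
      _ = Ws * (((1 + T) * (1 + T)⁻¹) * Wsi) := by
          rw [hWsWsi, Matrix.one_mul, Matrix.mul_assoc]
      _ = Ws * Wsi := by rw [h1TI, Matrix.one_mul]
      _ = 1 := hWsWsi
  have hRdetU : IsUnit R.det := by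
    have := congrArg Matrix.det hRinvEq
    rw [Matrix.det_mul, Matrix.det_one] at this
    exact IsUnit.of_mul_eq_one _ this
  have hRinv : R⁻¹ = Wsi * (1 + T)⁻¹ * Wsi := Matrix.inv_eq_right_inv hRinvEq
  have hRRi : R * R⁻¹ = 1 := Matrix.mul_nonsing_inv _ hRdetU
  have hRiR : R⁻¹ * R = 1 := Matrix.nonsing_inv_mul _ hRdetU
  have hRT : Rᵀ = R := by
    rw [hRdef]
    simp only [Matrix.transpose_add, Matrix.transpose_mul, Matrix.transpose_transpose,
      hSmT, hWm, Matrix.diagonal_transpose, Matrix.mul_assoc]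
  have hRiT : R⁻¹ᵀ = R⁻¹ := by rw [Matrix.transpose_nonsing_inv, hRT]
  -- completing the square
  set B₀ : Matrix (Fin N) (Fin M) ℝ := Sm * Aᵀ * R⁻¹ with hB₀
  have hB₀T : B₀ᵀ = R⁻¹ * (A * Sm) := by
    rw [hB₀]
    simp only [Matrix.transpose_mul, Matrix.transpose_transpose, hSmT, hRiT, Matrix.mul_assoc]
  have cancel2 : ∀ X : Matrix (Fin M) (Fin N) ℝ, R * (R⁻¹ * X) = X := by
    intro X; rw [← Matrix.mul_assoc, hRRi, Matrix.one_mul]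
  have cancel1 : ∀ X : Matrix (Fin M) (Fin N) ℝ, R⁻¹ * (R * X) = X := by
    intro X; rw [← Matrix.mul_assoc, hRiR, Matrix.one_mul]
  have expand : (B - B₀) * R * (B - B₀)ᵀ
      = B * (R * Bᵀ) - B * (A * Sm) - Sm * (Aᵀ * Bᵀ) + Sm * (Aᵀ * (R⁻¹ * (A * Sm))) := by
    rw [Matrix.transpose_sub, hB₀T, hB₀]
    simp only [Matrix.sub_mul, Matrix.mul_sub, Matrix.mul_assoc, cancel1, cancel2]
    abel
  have hRpsd : R.PosSemidef := by
    rw [hRdef, hASAT]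
    apply Matrix.PosSemidef.add
    · rw [← Matrix.conjTranspose_eq_transpose_of_trivial]
      exact Matrix.posSemidef_self_mul_conjTranspose H
    · rw [hWm]; exact Matrix.PosSemidef.diagonal (fun i => (hw i).le)
  have hsq_psd : ((B - B₀) * R * (B - B₀)ᵀ).PosSemidef := by
    have := hRpsd.mul_mul_conjTranspose_same (B - B₀)
    rwa [Matrix.conjTranspose_eq_transpose_of_trivial] at this
  have htr_sq : 0 ≤ Matrix.trace ((B - B₀) * R * (B - B₀)ᵀ) := by
    rw [Matrix.trace]
    apply Finset.sum_nonneg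
    intro i _
    exact hsq_psd.diag_nonneg
  -- the lower bound via trace identity
  have key1 : Matrix.trace (Sm - (2:ℝ) • (B * A * Sm) + B * R * Bᵀ)
      ≥ Matrix.trace Sm - Matrix.trace (Sm * (Aᵀ * (R⁻¹ * (A * Sm)))) := by
    have htr_expand := congrArg Matrix.trace expand
    rw [Matrix.trace_add, Matrix.trace_sub, Matrix.trace_sub] at htr_expand
    have e1 : Matrix.trace (Sm * (Aᵀ * Bᵀ)) = Matrix.trace (B * A * Sm) := by
      rw [show Sm * (Aᵀ * Bᵀ) = (B * A * Sm)ᵀ by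
        simp only [Matrix.transpose_mul, hSmT, Matrix.mul_assoc], Matrix.trace_transpose]
    have e2 : Matrix.trace (B * (A * Sm)) = Matrix.trace (B * A * Sm) := by
      rw [Matrix.mul_assoc]
    have e3 : Matrix.trace (B * (R * Bᵀ)) = Matrix.trace (B * R * Bᵀ) := by
      rw [Matrix.mul_assoc]
    rw [Matrix.trace_add, Matrix.trace_sub, Matrix.trace_smul] at *
    rw [e1, e2, e3] at htr_expand
    have := htr_sq
    rw [htr_expand] at this
    simp only [smul_eq_mul]
    linarith
  -- spectral decomposition of T
  have hTH : T.IsHermitian := hTpsd.1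
  set d : Fin M → ℝ := hTH.eigenvalues with hd
  set U : Matrix (Fin M) (Fin M) ℝ := (hTH.eigenvectorUnitary : Matrix (Fin M) (Fin M) ℝ)
    with hUdef
  have hUUT : U * Uᵀ = 1 := by
    have := Matrix.mem_unitaryGroup_iff.mp (hTH.eigenvectorUnitary).2
    simpa [Matrix.star_eq_conjTranspose, Matrix.conjTranspose_eq_transpose_of_trivial]
      using this
  have hUTU : Uᵀ * U = 1 := by
    have := Matrix.mem_unitaryGroup_iff'.mp (hTH.eigenvectorUnitary).2
    simpa [Matrix.star_eq_conjTranspose, Matrix.conjTranspose_eq_transpose_of_trivial]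
      using this
  have hspec : T = U * Matrix.diagonal d * Uᵀ := by
    have h := hTH.spectral_theorem
    simpa [Matrix.star_eq_conjTranspose, Matrix.conjTranspose_eq_transpose_of_trivial,
      Function.comp] using h
  have hd0 : ∀ i, 0 ≤ d i := fun i => hTpsd.eigenvalues_nonneg i
  have h1d : ∀ i, (0:ℝ) < 1 + d i := fun i => by linarith [hd0 i]
  have h1dne : ∀ i, (1:ℝ) + d i ≠ 0 := fun i => ne_of_gt (h1d i)
  have hdiag1 : (1 : Matrix (Fin M) (Fin M) ℝ) + Matrix.diagonal d
      = Matrix.diagonal (fun i => 1 + d i) := by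
    rw [← Matrix.diagonal_one, Matrix.diagonal_add]
  have h1Talt : 1 + T = U * Matrix.diagonal (fun i => 1 + d i) * Uᵀ := by
    rw [hspec, ← hdiag1, Matrix.mul_add, Matrix.add_mul, Matrix.mul_one, hUUT]
  have hdetU2 : U.det * U.det = 1 := by
    have := congrArg Matrix.det hUUT
    rwa [Matrix.det_mul, Matrix.det_transpose, Matrix.det_one] at this
  have hdet1T : (1+T).det = ∏ i, (1 + d i) := by
    rw [h1Talt, Matrix.det_mul, Matrix.det_mul, Matrix.det_diagonal, Matrix.det_transpose]
    linear_combination (∏ i, (1 + d i)) * hdetU2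
  have hinv1T : (1+T)⁻¹ = U * Matrix.diagonal (fun i => (1 + d i)⁻¹) * Uᵀ := by
    apply Matrix.inv_eq_right_inv
    rw [h1Talt]
    calc U * Matrix.diagonal (fun i => 1 + d i) * Uᵀ
          * (U * Matrix.diagonal (fun i => (1+d i)⁻¹) * Uᵀ)
        = U * (Matrix.diagonal (fun i => 1 + d i)
            * ((Uᵀ * U) * (Matrix.diagonal (fun i => (1+d i)⁻¹) * Uᵀ))) := by
          simp only [Matrix.mul_assoc]
      _ = U * ((Matrix.diagonal (fun i => 1 + d i)
            * Matrix.diagonal (fun i => (1+d i)⁻¹)) * Uᵀ) := by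
          rw [hUTU, Matrix.one_mul, Matrix.mul_assoc]
      _ = U * Uᵀ := by
          rw [Matrix.diagonal_mul_diagonal,
            show (fun i => (1+d i) * (1+d i)⁻¹) = fun _ => (1:ℝ) from
              funext fun i => mul_inv_cancel₀ (h1dne i),
            Matrix.diagonal_one, Matrix.one_mul]
      _ = 1 := hUUT
  set V : Matrix (Fin M) (Fin N) ℝ := Uᵀ * K with hVdef
  have hVT : Vᵀ = Kᵀ * U := by
    rw [hVdef, Matrix.transpose_mul, Matrix.transpose_transpose]
  have hVVT : V * Vᵀ = Matrix.diagonal d := by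
    rw [hVdef, hVT]
    calc Uᵀ * K * (Kᵀ * U) = Uᵀ * (K * Kᵀ) * U := by simp only [Matrix.mul_assoc]
      _ = Uᵀ * (U * Matrix.diagonal d * Uᵀ) * U := by rw [← hTdef, hspec]
      _ = (Uᵀ * U) * (Matrix.diagonal d * (Uᵀ * U)) := by simp only [Matrix.mul_assoc]
      _ = Matrix.diagonal d := by rw [hUTU, Matrix.one_mul, Matrix.mul_one]
  set g : Fin M → ℝ := fun i => ∑ n, σ n * (V i n)^2 with hgdef
  have hgii : ∀ i, (V * Sm * Vᵀ) i i = g i := by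
    intro i
    rw [hgdef, Matrix.mul_apply]
    apply Finset.sum_congr rfl
    intro n _
    rw [hSm, Matrix.mul_diagonal, Matrix.transpose_apply]
    ring
  have hdii : ∀ i, ∑ n, (V i n)^2 = d i := by
    intro i
    have h := congrArg (fun X : Matrix (Fin M) (Fin M) ℝ => X i i) hVVT
    simp only [Matrix.mul_apply, Matrix.diagonal_apply_eq, Matrix.transpose_apply] at h
    rw [← h]
    apply Finset.sum_congr rfl
    intro n _
    ring
  -- trace of the subtracted term
  have htermA : Sm * (Aᵀ * (R⁻¹ * (A * Sm))) = (Ss * Kᵀ) * ((1+T)⁻¹ * (K * Ss)) := by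
    rw [hKT, hKdef, hHT, hHdef, hRinv, ← hSsSs]
    simp only [Matrix.mul_assoc]
  have htermB : ((1+T)⁻¹ * (K * Ss)) * (Ss * Kᵀ) = (1+T)⁻¹ * (K * Sm * Kᵀ) := by
    rw [← hSsSs]
    simp only [Matrix.mul_assoc]
  have htermC : Uᵀ * ((K * Sm * Kᵀ) * U) = V * Sm * Vᵀ := by
    rw [hVdef, hVT]
    simp only [Matrix.mul_assoc]
  have hterm : Matrix.trace (Sm * (Aᵀ * (R⁻¹ * (A * Sm)))) = ∑ i, (1 + d i)⁻¹ * g i := by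
    rw [htermA, Matrix.trace_mul_comm, htermB, hinv1T]
    calc Matrix.trace (U * Matrix.diagonal (fun i => (1+d i)⁻¹) * Uᵀ * (K * Sm * Kᵀ))
        = Matrix.trace (U * (Matrix.diagonal (fun i => (1+d i)⁻¹) * (Uᵀ * (K * Sm * Kᵀ)))) := by
          simp only [Matrix.mul_assoc]
      _ = Matrix.trace ((Matrix.diagonal (fun i => (1+d i)⁻¹) * (Uᵀ * (K * Sm * Kᵀ))) * U) :=
          Matrix.trace_mul_comm _ _
      _ = Matrix.trace (Matrix.diagonal (fun i => (1+d i)⁻¹) * (Uᵀ * ((K * Sm * Kᵀ) * U))) := by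
          simp only [Matrix.mul_assoc]
      _ = Matrix.trace (Matrix.diagonal (fun i => (1+d i)⁻¹) * (V * Sm * Vᵀ)) := by rw [htermC]
      _ = ∑ i, (1 + d i)⁻¹ * g i := by
          rw [Matrix.trace]
          apply Finset.sum_congr rfl
          intro i _
          rw [Matrix.diag]
          rw [Matrix.diagonal_mul, hgii i]
  -- rate constraint
  have hWsdet : Ws.det = ∏ i, wsq i := by rw [hWs, Matrix.det_diagonal]
  have hWmdet : Wm.det = ∏ i, w i := by rw [hWm, Matrix.det_diagonal]
  have hwsqprod : (∏ i, wsq i) * (∏ i, wsq i) = ∏ i, w i := by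
    rw [← Finset.prod_mul_distrib]
    exact Finset.prod_congr rfl (fun i _ => hws2 i)
  have hRdet : R.det = (∏ i, w i) * (1+T).det := by
    rw [hRWs, Matrix.det_mul, Matrix.det_mul, hWsdet]
    linear_combination (1+T).det * hwsqprod
  have hprodw_ne : (∏ i, w i) ≠ 0 :=
    Finset.prod_ne_zero_iff.mpr (fun i _ => ne_of_gt (hw i))
  have hdetWmi : Wm⁻¹.det = (Wm.det)⁻¹ := by
    rw [Matrix.det_nonsing_inv, Ring.inverse_eq_inv]
  have hdet_constr : (Wm⁻¹ * R).det = (1+T).det := by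
    rw [Matrix.det_mul, hdetWmi, hWmdet, hRdet]
    field_simp
  have hlog2C : Real.log ((1+T).det) ≤ 2*C := by
    rw [hdet_constr] at hrateB
    linarith
  have hsumlog : ∑ i, Real.log (1 + d i) ≤ 2*C := by
    rw [hdet1T, Real.log_prod (fun i _ => h1dne i)] at hlog2C
    exact hlog2C
  -- scalar reduction
  set s : Fin M → ℝ := fun i => if d i = 0 then 0 else g i / d i with hsdef
  set c : Fin M → ℝ := fun i => if d i = 0 then 0 else (d i)⁻¹ with hcdef
  have hg0 : ∀ i, 0 ≤ g i := by
    intro i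
    rw [hgdef]
    exact Finset.sum_nonneg (fun n _ => mul_nonneg (hσ n).le (sq_nonneg _))
  have hs0 : ∀ i, 0 ≤ s i := by
    intro i
    rw [hsdef]
    dsimp only
    split_ifs with h
    · exact le_rfl
    · exact div_nonneg (hg0 i) (hd0 i)
  have hgs : ∀ i, g i = s i * d i := by
    intro i
    rw [hsdef]
    dsimp only
    split_ifs with h
    · have hz : ∑ n, (V i n)^2 = 0 := by rw [hdii i, h]
      have hzz := (Finset.sum_eq_zero_iff_of_nonneg
        (fun n (_ : n ∈ Finset.univ) => sq_nonneg (V i n))).mp hz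
      rw [hgdef]
      dsimp only
      rw [Finset.sum_eq_zero (fun n _ => by rw [hzz n (Finset.mem_univ n), mul_zero])]
      ring
    · field_simp
  have hperi : ∀ i, (1 + d i)⁻¹ * g i ≤ psiF lam (s i) + lam/2 * Real.log (1 + d i) := by
    intro i
    have h1 : (1 + d i)⁻¹ * g i = d i/(1 + d i) * s i := by
      rw [hgs i]
      field_simp
    rw [h1]
    exact permode hlam (hs0 i) (hd0 i)
  have hsum1 : ∑ i, (1 + d i)⁻¹ * g i ≤ (∑ i, psiF lam (s i)) + lam*C := by
    calc ∑ i, (1 + d i)⁻¹ * g i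
        ≤ ∑ i, (psiF lam (s i) + lam/2 * Real.log (1 + d i)) :=
          Finset.sum_le_sum (fun i _ => hperi i)
      _ = (∑ i, psiF lam (s i)) + lam/2 * ∑ i, Real.log (1 + d i) := by
          rw [Finset.sum_add_distrib, Finset.mul_sum]
      _ ≤ (∑ i, psiF lam (s i)) + lam*C := by nlinarith [hsumlog]
  -- subset-sum domination via projection
  have hsub : ∀ I : Finset (Fin M), ∑ i ∈ I, s i
      ≤ ∑ n ∈ Finset.univ.filter (fun n : Fin N => (n:ℕ) < I.card), σ n := by
    intro I
    set cI : Fin M → ℝ := fun i => if i ∈ I then c i else 0 with hcI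
    set P : Matrix (Fin N) (Fin N) ℝ := Vᵀ * Matrix.diagonal cI * V with hP
    set al : Fin N → ℝ := fun n => ∑ i, cI i * (V i n)^2 with hal
    have hc0 : ∀ i, 0 ≤ c i := by
      intro i
      rw [hcdef]
      dsimp only
      split_ifs with h
      · exact le_rfl
      · exact inv_nonneg.mpr (hd0 i)
    have hcI0 : ∀ i, 0 ≤ cI i := by
      intro i
      rw [hcI]
      dsimp only
      split_ifs
      · exact hc0 i
      · exact le_rfl
    have hPnn : ∀ n, P n n = al n := by
      intro n
      rw [hP, hal]
      dsimp only
      rw [Matrix.mul_apply]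
      apply Finset.sum_congr rfl
      intro i _
      rw [Matrix.mul_diagonal, Matrix.transpose_apply]
      ring
    have hPsym : Pᵀ = P := by
      rw [hP]
      simp only [Matrix.transpose_mul, Matrix.transpose_transpose,
        Matrix.diagonal_transpose, Matrix.mul_assoc]
    have hcc : (fun i => cI i * (d i * cI i)) = cI := by
      funext i
      rw [hcI, hcdef]
      dsimp only
      by_cases hI : i ∈ I
      · by_cases hdz : d i = 0
        · simp [hI, hdz]
        · simp only [hI, if_true, hdz, if_false]
          field_simp
      · simp [hI]
    have hPP : P * P = P := by
      rw [hP]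
      calc Vᵀ * Matrix.diagonal cI * V * (Vᵀ * Matrix.diagonal cI * V)
          = Vᵀ * (Matrix.diagonal cI * ((V * Vᵀ) * (Matrix.diagonal cI * V))) := by
            simp only [Matrix.mul_assoc]
        _ = Vᵀ * (Matrix.diagonal cI * (Matrix.diagonal d * (Matrix.diagonal cI * V))) := by
            rw [hVVT]
        _ = Vᵀ * ((Matrix.diagonal cI * (Matrix.diagonal d * Matrix.diagonal cI)) * V) := by
            simp only [Matrix.mul_assoc]
        _ = Vᵀ * (Matrix.diagonal cI * V) := by
            rw [Matrix.diagonal_mul_diagonal, Matrix.diagonal_mul_diagonal, hcc]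
        _ = Vᵀ * Matrix.diagonal cI * V := by rw [Matrix.mul_assoc]
    have hal0 : ∀ n, 0 ≤ al n := by
      intro n
      rw [hal]
      exact Finset.sum_nonneg (fun i _ => mul_nonneg (hcI0 i) (sq_nonneg _))
    have hal1 : ∀ n, al n ≤ 1 := by
      intro n
      have h1 : ∑ k, P n k * P k n = P n n := by
        have h0 := congrArg (fun X : Matrix (Fin N) (Fin N) ℝ => X n n) hPP
        simp only [Matrix.mul_apply] at h0
        exact h0
      have h2 : ∀ k, P k n = P n k := by
        intro k
        conv_lhs => rw [← hPsym]
        rw [Matrix.transpose_apply]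
      have h3 : ∑ k, (P n k)^2 = P n n := by
        rw [← h1]
        apply Finset.sum_congr rfl
        intro k _
        rw [h2 k]
        ring
      have h4 : (P n n)^2 ≤ ∑ k, (P n k)^2 :=
        Finset.single_le_sum (f := fun k => (P n k)^2)
          (fun k _ => sq_nonneg _) (Finset.mem_univ n)
      have h5 := hPnn n
      nlinarith [hal0 n]
    have halsum : ∑ n, al n ≤ (I.card : ℝ) := by
      have e1 : ∑ n, al n = ∑ i, cI i * d i := by
        rw [hal]
        dsimp only
        rw [Finset.sum_comm]
        apply Finset.sum_congr rfl
        intro i _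
        rw [← Finset.mul_sum, hdii i]
      have e2 : ∀ i, cI i * d i ≤ (if i ∈ I then (1:ℝ) else 0) := by
        intro i
        rw [hcI, hcdef]
        dsimp only
        by_cases hI : i ∈ I
        · by_cases hdz : d i = 0
          · simp [hI, hdz]
          · simp only [hI, if_true, hdz, if_false]
            rw [inv_mul_cancel₀ hdz]
        · simp [hI]
      have e3 : ∑ i, (if i ∈ I then (1:ℝ) else 0) = (I.card : ℝ) := by
        rw [Finset.sum_ite_mem, Finset.univ_inter, Finset.sum_const, nsmul_eq_mul, mul_one]
      rw [e1, ← e3]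
      exact Finset.sum_le_sum (fun i _ => e2 i)
    have hcardI : I.card ≤ N := by
      have h1 : I.card ≤ M := by
        have := Finset.card_le_univ I
        simpa using this
      exact h1.trans hMN
    have htop := topsum σ (fun n => (hσ n).le) hsorted al hal0 hal1 I.card hcardI halsum
    have hswap : ∑ i ∈ I, s i = ∑ n, σ n * al n := by
      have hsi : ∀ i ∈ I, s i = ∑ n, σ n * (cI i * (V i n)^2) := by
        intro i hi
        rw [hsdef, hcI, hcdef]
        dsimp only
        rw [if_pos hi]
        by_cases hdz : d i = 0
        · simp [hdz]
        · rw [if_neg hdz, if_neg hdz, hgdef]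
          dsimp only
          rw [Finset.sum_div]
          apply Finset.sum_congr rfl
          intro n _
          rw [div_eq_mul_inv]
          ring
      calc ∑ i ∈ I, s i = ∑ i ∈ I, ∑ n, σ n * (cI i * (V i n)^2) :=
            Finset.sum_congr rfl hsi
        _ = ∑ n, ∑ i ∈ I, σ n * (cI i * (V i n)^2) := Finset.sum_comm
        _ = ∑ n, σ n * al n := by
            apply Finset.sum_congr rfl
            intro n _
            rw [hal]
            dsimp only
            rw [Finset.mul_sum]
            apply Finset.sum_subset (Finset.subset_univ I)
            intro x _ hx
            rw [hcI]
            dsimp only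
            rw [if_neg hx]
            ring
    rw [hswap]
    exact htop
  -- assemble everything
  have hkey := key_scalar hMN σ hσ hlam s hs0 hsub
  have hsplitM : ∑ n ∈ Finset.univ.filter (fun n : Fin N => (n:ℕ) < M), psiF lam (σ n)
      = ∑ n ∈ Finset.univ.filter (fun n : Fin N => (n:ℕ) < a), psiF lam (σ n) := by
    symm
    apply Finset.sum_subset
    · intro n hn
      simp only [Finset.mem_filter, Finset.mem_univ, true_and] at *
      exact lt_of_lt_of_le hn haM
    · intro n hn hna
      simp only [Finset.mem_filter, Finset.mem_univ, true_and] at hn hna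
      have h1 : a ≤ (n:ℕ) := not_lt.mp hna
      have h2 := hinact n h1 hn
      unfold psiF
      rw [if_pos h2]
  have hrate2 : ∑ k ∈ Finset.univ.filter (fun k : Fin N => (k:ℕ) < a),
      Real.log (2*σ k/lam) = 2*C := by linarith
  have hpsia : ∑ n ∈ Finset.univ.filter (fun n : Fin N => (n:ℕ) < a), psiF lam (σ n)
      = (∑ n ∈ Finset.univ.filter (fun n : Fin N => (n:ℕ) < a), σ n)
        - (a:ℝ) * (lam/2) - lam*C := by
    have hterms : ∀ n ∈ Finset.univ.filter (fun n : Fin N => (n:ℕ) < a),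
        psiF lam (σ n) = σ n - lam/2 - lam/2 * Real.log (2*σ n/lam) := by
      intro n hn
      simp only [Finset.mem_filter, Finset.mem_univ, true_and] at hn
      unfold psiF
      rw [if_neg (not_le.mpr (hact n hn))]
    rw [Finset.sum_congr rfl hterms]
    rw [Finset.sum_sub_distrib, Finset.sum_sub_distrib, ← Finset.mul_sum, hrate2]
    have hca : ∑ _n ∈ Finset.univ.filter (fun n : Fin N => (n:ℕ) < a), (lam/2)
        = (a:ℝ) * (lam/2) := by
      rw [Finset.sum_const, filter_lt_card (haM.trans hMN), nsmul_eq_mul]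
    rw [hca]
    ring
  have htrSm : Matrix.trace Sm
      = (∑ n ∈ Finset.univ.filter (fun n : Fin N => (n:ℕ) < a), σ n)
        + (∑ n ∈ Finset.univ.filter (fun n : Fin N => a ≤ (n:ℕ)), σ n) := by
    rw [hSm, Matrix.trace_diagonal]
    rw [← Finset.sum_filter_add_sum_filter_not Finset.univ (fun n : Fin N => (n:ℕ) < a) σ]
    congr 2
    apply Finset.filter_congr
    intro x _
    simp [not_lt]
  linarith [key1, hterm, hsum1, hkey, hsplitM, hpsia, htrSm]
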